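/- (Lower bound on the Gaussian measure of a cone neighborhood) Let $Y \sim N(0, A)$ on $\mathbb{R}^d$ with $A$ positive definite, let $s \in \mathbb{R}^d$, and $\varepsilon > 0$. Then $P(Y \geq s,\; (Y-s)^T A^{-1}(Y-s) \leq \varepsilon^2) \geq (2\pi)^{-d/2}|A|^{-1/2} e^{-\varepsilon^2/2} e^{-s^T A^{-1} s / 2} \prod_{i=1}^d \frac{1 - e^{-(s^T A^{-1} e_i)\tilde\varepsilon}}{s^T A^{-1} e_i}$, where $\tilde\varepsilon = \varepsilon \min\{\|u\|_\infty : u^T A^{-1} u = 1\}$ and $e_i$ are standard basis vectors, assuming $s^T A^{-1} e_i > 0$ for all $i$ (with the convention that the factor is $\tilde\varepsilon$ when $s^T A^{-1} e_i = 0$). -/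

import Mathlib

open MeasureTheory Matrix

/-- The density of `N(m, A)` on `ℝ^d` (with respect to Lebesgue measure). -/
noncomputable def gaussDensity {d : ℕ} (m : Fin d → ℝ) (A : Matrix (Fin d) (Fin d) ℝ)
    (x : Fin d → ℝ) : ℝ :=
  (2 * Real.pi) ^ (-(d : ℝ) / 2) * A.det ^ (-(1 : ℝ) / 2) *
    Real.exp (-(1 / 2) * ((x - m) ⬝ᵥ (A⁻¹ *ᵥ (x - m))))

lemma ellipsoid_bounded {d : ℕ} {B : Matrix (Fin d) (Fin d) ℝ} (hB : B.PosDef) (ε : ℝ) :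
    ∃ R : ℝ, 0 ≤ R ∧ ∀ v : Fin d → ℝ, v ⬝ᵥ (B *ᵥ v) ≤ ε ^ 2 → ‖v‖ ≤ R := by
  classical
  open scoped MatrixOrder in
  set S := CFC.sqrt B with hSdef
  open scoped MatrixOrder in
  have hSS : S * S = B := CFC.sqrt_mul_sqrt_self B hB.posSemidef.nonneg
  open scoped MatrixOrder in
  have hSherm : S.IsHermitian := (CFC.sqrt_nonneg B).posSemidef.1
  have hSsym : Sᵀ = S := by
    have := hSherm.eq
    simpa using this
  have hdet : S.det ≠ 0 := by
    intro h
    have : B.det = 0 := by rw [← hSS, det_mul, h, mul_zero]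
    exact hB.det_pos.ne' this
  have hinv : S⁻¹ * S = 1 := nonsing_inv_mul S (isUnit_iff_ne_zero.mpr hdet)
  refine ⟨(∑ i, ∑ j, |S⁻¹ i j|) * |ε|, by positivity, fun v hv => ?_⟩
  set z := S *ᵥ v with hz
  have hq : v ⬝ᵥ (B *ᵥ v) = z ⬝ᵥ z := by
    rw [← hSS, ← mulVec_mulVec, dotProduct_mulVec, ← mulVec_transpose, hSsym]
  have hzj : ∀ j, |z j| ≤ |ε| := by
    intro j
    have h1 : z j ^ 2 ≤ ∑ k, z k ^ 2 :=
      Finset.single_le_sum (f := fun k => z k ^ 2) (fun _ _ => sq_nonneg _) (Finset.mem_univ j)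
    have h2 : z ⬝ᵥ z = ∑ k, z k ^ 2 := by simp [dotProduct, sq]
    have : z j ^ 2 ≤ ε ^ 2 := by
      calc z j ^ 2 ≤ z ⬝ᵥ z := by rw [h2]; exact h1
      _ ≤ ε ^ 2 := by rw [← hq]; exact hv
    exact sq_le_sq.mp this
  have hvz : v = S⁻¹ *ᵥ z := by
    rw [hz, mulVec_mulVec, hinv, one_mulVec]
  rw [pi_norm_le_iff_of_nonneg (by positivity)]
  intro i
  rw [Real.norm_eq_abs, hvz]
  have : |(S⁻¹ *ᵥ z) i| ≤ ∑ j, |S⁻¹ i j| * |ε| := by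
    calc |(S⁻¹ *ᵥ z) i| = |∑ j, S⁻¹ i j * z j| := by simp [mulVec, dotProduct]
    _ ≤ ∑ j, |S⁻¹ i j * z j| := Finset.abs_sum_le_sum_abs _ _
    _ ≤ ∑ j, |S⁻¹ i j| * |ε| := by
        refine Finset.sum_le_sum fun j _ => ?_
        rw [abs_mul]
        exact mul_le_mul_of_nonneg_left (hzj j) (abs_nonneg _)
  refine this.trans ?_
  rw [← Finset.sum_mul]
  refine mul_le_mul_of_nonneg_right ?_ (abs_nonneg _)
  exact Finset.single_le_sum (f := fun i => ∑ j, |S⁻¹ i j|)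
    (fun _ _ => Finset.sum_nonneg fun _ _ => abs_nonneg _) (Finset.mem_univ i)

lemma key_small {d : ℕ} {B : Matrix (Fin d) (Fin d) ℝ} (hB : B.PosDef) {ε : ℝ} (hε : 0 < ε)
    (v : Fin d → ℝ)
    (hv : ‖v‖ ≤ ε * sInf {r : ℝ | ∃ u : Fin d → ℝ, u ⬝ᵥ (B *ᵥ u) = 1 ∧ r = ‖u‖}) :
    v ⬝ᵥ (B *ᵥ v) ≤ ε ^ 2 := by
  set m := sInf {r : ℝ | ∃ u : Fin d → ℝ, u ⬝ᵥ (B *ᵥ u) = 1 ∧ r = ‖u‖} with hm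
  rcases eq_or_ne v 0 with rfl | hv0
  · simp; positivity
  have hq : 0 < v ⬝ᵥ (B *ᵥ v) := by
    have := hB.dotProduct_mulVec_pos hv0
    simpa using this
  set q := v ⬝ᵥ (B *ᵥ v) with hqdef
  have hsq : 0 < Real.sqrt q := Real.sqrt_pos.mpr hq
  have hu1 : ((Real.sqrt q)⁻¹ • v) ⬝ᵥ (B *ᵥ ((Real.sqrt q)⁻¹ • v)) = 1 := by
    rw [mulVec_smul, dotProduct_smul, smul_dotProduct]
    simp only [smul_eq_mul, ← hqdef]
    rw [← mul_assoc]
    rw [← Real.sqrt_mul_self hq.le]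
    field_simp
    rw [Real.sq_sqrt (Real.sqrt_nonneg _)]
  have hmem : ‖(Real.sqrt q)⁻¹ • v‖ ∈ {r : ℝ | ∃ u : Fin d → ℝ, u ⬝ᵥ (B *ᵥ u) = 1 ∧ r = ‖u‖} :=
    ⟨_, hu1, rfl⟩
  have hbdd : BddBelow {r : ℝ | ∃ u : Fin d → ℝ, u ⬝ᵥ (B *ᵥ u) = 1 ∧ r = ‖u‖} :=
    ⟨0, fun r ⟨u, _, hr⟩ => hr ▸ norm_nonneg u⟩
  have hle : m ≤ (Real.sqrt q)⁻¹ * ‖v‖ := by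
    have := csInf_le hbdd hmem
    rwa [norm_smul, Real.norm_eq_abs, abs_inv, abs_of_pos hsq] at this
  have h1 : m * Real.sqrt q ≤ ‖v‖ := by
    rw [mul_comm]
    calc Real.sqrt q * m ≤ Real.sqrt q * ((Real.sqrt q)⁻¹ * ‖v‖) :=
      mul_le_mul_of_nonneg_left hle hsq.le
    _ = ‖v‖ := by field_simp
  have hm0 : 0 ≤ m := le_csInf ⟨_, hmem⟩ fun r ⟨u, _, hr⟩ => hr ▸ norm_nonneg u
  rcases eq_or_lt_of_le hm0 with hmz | hmpos
  · exfalso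
    have : ‖v‖ ≤ 0 := by rw [← hmz] at hv; simpa using hv
    exact hv0 (norm_le_zero_iff.mp this)
  · have h2 : m * Real.sqrt q ≤ ε * m := h1.trans hv
    have h3 : Real.sqrt q ≤ ε := by
      exact (mul_le_mul_iff_right₀ hmpos).mp (by rwa [mul_comm ε m] at h2)
    calc q = Real.sqrt q ^ 2 := (Real.sq_sqrt hq.le).symm
    _ ≤ ε ^ 2 := pow_le_pow_left₀ (Real.sqrt_nonneg _) h3 2

lemma quad_expand {d : ℕ} {B : Matrix (Fin d) (Fin d) ℝ} (hBsym : Bᵀ = B)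
    (s v : Fin d → ℝ) :
    (s + v) ⬝ᵥ (B *ᵥ (s + v)) =
      s ⬝ᵥ (B *ᵥ s) + 2 * ((s ᵥ* B) ⬝ᵥ v) + v ⬝ᵥ (B *ᵥ v) := by
  have hsw : v ᵥ* B ⬝ᵥ s = s ᵥ* B ⬝ᵥ v := by
    rw [← mulVec_transpose, hBsym, dotProduct_comm, dotProduct_mulVec]
  rw [mulVec_add, dotProduct_add, add_dotProduct, add_dotProduct,
    dotProduct_mulVec s B v, dotProduct_mulVec v B s, hsw]
  ring

lemma lin_coords {d : ℕ} (B : Matrix (Fin d) (Fin d) ℝ) (s v : Fin d → ℝ) :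
    (s ᵥ* B) ⬝ᵥ v = ∑ i, (s ⬝ᵥ (B *ᵥ Pi.single i 1)) * v i := by
  simp only [dotProduct_mulVec, dotProduct_single, mul_one]
  rfl

lemma one_dim_integral (a L c : ℝ) (hL : 0 ≤ L) (hc : c ≠ 0) :
    ∫ t in Set.Icc a (a + L), Real.exp (-c * (t - a)) = (1 - Real.exp (-c * L)) / c := by
  rw [MeasureTheory.integral_Icc_eq_integral_Ioc,
    ← intervalIntegral.integral_of_le (by linarith : a ≤ a + L)]
  have hderiv : ∀ t ∈ Set.uIcc a (a + L),
      HasDerivAt (fun t => Real.exp (-c * (t - a)) / (-c)) (Real.exp (-c * (t - a))) t := by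
    intro t _
    have hlin : HasDerivAt (fun t : ℝ => -c * (t - a)) (-c) t := by
      simpa using ((hasDerivAt_id t).sub_const a).const_mul (-c)
    have h : HasDerivAt (fun t : ℝ => Real.exp (-c * (t - a)))
        (Real.exp (-c * (t - a)) * (-c)) t :=
      hlin.exp
    have := h.div_const (-c)
    exact this.congr_deriv (mul_div_cancel_right₀ _ (neg_ne_zero.mpr hc))
  have hcont : IntervalIntegrable (fun t => Real.exp (-c * (t - a))) volume a (a + L) := by
    apply Continuous.intervalIntegrable
    exact Real.continuous_exp.comp (continuous_const.mul ((continuous_id).sub continuous_const))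
  rw [intervalIntegral.integral_eq_sub_of_hasDerivAt hderiv hcont]
  have h1 : -c * (a + L - a) = -c * L := by ring
  have h2 : -c * (a - a) = 0 := by ring
  rw [h1, h2, Real.exp_zero, div_sub_div_same, div_neg, ← neg_div, neg_sub]

lemma box_integral {d : ℕ} (s : Fin d → ℝ) (ε' : ℝ) (hε' : 0 ≤ ε')
    (c : Fin d → ℝ) (hc : ∀ i, c i ≠ 0) :
    ∫ y in Set.univ.pi fun i => Set.Icc (s i) (s i + ε'),
        ∏ i, Real.exp (-(c i) * (y i - s i)) =
      ∏ i, (1 - Real.exp (-(c i) * ε')) / c i := by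
  classical
  have hmeas : MeasurableSet (Set.univ.pi fun i => Set.Icc (s i) (s i + ε')) :=
    MeasurableSet.univ_pi fun i => measurableSet_Icc
  set g := fun (i : Fin d) (t : ℝ) =>
    (Set.Icc (s i) (s i + ε')).indicator (fun t => Real.exp (-(c i) * (t - s i))) t with hg
  have hprod_eq : ∀ y : Fin d → ℝ,
      ((Set.univ.pi fun i => Set.Icc (s i) (s i + ε')).indicator
        (fun y => ∏ i, Real.exp (-(c i) * (y i - s i)))) y = ∏ i, g i (y i) := by
    intro y
    by_cases hy : y ∈ Set.univ.pi fun i => Set.Icc (s i) (s i + ε')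
    · rw [Set.indicator_of_mem hy]
      refine Finset.prod_congr rfl fun i _ => ?_
      exact (Set.indicator_of_mem (Set.mem_univ_pi.mp hy i) (fun t => Real.exp (-(c i) * (t - s i)))).symm
    · rw [Set.indicator_of_notMem hy]
      symm
      obtain ⟨i, hi⟩ : ∃ i, y i ∉ Set.Icc (s i) (s i + ε') := by
        by_contra h
        push_neg at h
        exact hy (Set.mem_univ_pi.mpr h)
      exact Finset.prod_eq_zero (Finset.mem_univ i) (Set.indicator_of_notMem hi (fun t => Real.exp (-(c i) * (t - s i))))
  calc ∫ y in Set.univ.pi fun i => Set.Icc (s i) (s i + ε'),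
        ∏ i, Real.exp (-(c i) * (y i - s i))
      = ∫ y : Fin d → ℝ, ((Set.univ.pi fun i => Set.Icc (s i) (s i + ε')).indicator
          (fun y => ∏ i, Real.exp (-(c i) * (y i - s i)))) y := by
        rw [MeasureTheory.integral_indicator hmeas]
    _ = ∫ y : Fin d → ℝ, ∏ i, g i (y i) := by
        congr 1
        funext y
        exact hprod_eq y
    _ = ∏ i, ∫ t : ℝ, g i t := MeasureTheory.integral_fintype_prod_eq_prod g
    _ = ∏ i, (1 - Real.exp (-(c i) * ε')) / c i := by
        refine Finset.prod_congr rfl fun i _ => ?_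
        rw [hg]
        rw [MeasureTheory.integral_indicator measurableSet_Icc]
        exact one_dim_integral (s i) ε' (c i) hε' (hc i)

/-- Lower bound on the `N(0,A)`-measure of the cone neighborhood
`{y : y ≥ s, (y-s)ᵀA⁻¹(y-s) ≤ ε²}`, assuming `sᵀA⁻¹eᵢ > 0` for all `i`, where
`ε̃ = ε · min{‖u‖_∞ : uᵀA⁻¹u = 1}` and the `eᵢ` are standard basis vectors. -/
theorem stmt14 {d : ℕ} (A : Matrix (Fin d) (Fin d) ℝ) (hpd : A.PosDef)
    (s : Fin d → ℝ) (ε : ℝ) (hε : 0 < ε)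
    (hpos : ∀ i : Fin d, 0 < s ⬝ᵥ (A⁻¹ *ᵥ (Pi.single i 1))) :
    (2 * Real.pi) ^ (-(d : ℝ) / 2) * A.det ^ (-(1 : ℝ) / 2) *
        Real.exp (-(ε ^ 2) / 2) * Real.exp (-(s ⬝ᵥ (A⁻¹ *ᵥ s)) / 2) *
        ∏ i : Fin d,
          (1 - Real.exp (-(s ⬝ᵥ (A⁻¹ *ᵥ (Pi.single i 1))) *
              (ε * sInf {r : ℝ | ∃ u : Fin d → ℝ, u ⬝ᵥ (A⁻¹ *ᵥ u) = 1 ∧ r = ‖u‖}))) /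
            (s ⬝ᵥ (A⁻¹ *ᵥ (Pi.single i 1))) ≤
      ∫ y in {y : Fin d → ℝ | s ≤ y ∧ (y - s) ⬝ᵥ (A⁻¹ *ᵥ (y - s)) ≤ ε ^ 2},
        gaussDensity 0 A y := by
  classical
  have hBpd : (A⁻¹).PosDef := hpd.inv
  have hBsym : (A⁻¹)ᵀ = A⁻¹ := by
    have := hBpd.1.eq
    simpa using this
  set m := sInf {r : ℝ | ∃ u : Fin d → ℝ, u ⬝ᵥ (A⁻¹ *ᵥ u) = 1 ∧ r = ‖u‖} with hm
  have hm0 : 0 ≤ m := by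
    apply Real.sInf_nonneg
    rintro r ⟨u, -, rfl⟩
    exact norm_nonneg u
  set ε' := ε * m with hε'
  have hε'0 : 0 ≤ ε' := mul_nonneg hε.le hm0
  set Bx := Set.univ.pi fun i => Set.Icc (s i) (s i + ε') with hBx
  set Rg := {y : Fin d → ℝ | s ≤ y ∧ (y - s) ⬝ᵥ (A⁻¹ *ᵥ (y - s)) ≤ ε ^ 2} with hRg
  have hKpos : 0 < (2 * Real.pi) ^ (-(d : ℝ) / 2) * A.det ^ (-(1 : ℝ) / 2) :=
    mul_pos (Real.rpow_pos_of_pos (by positivity) _)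
      (Real.rpow_pos_of_pos hpd.det_pos _)
  -- continuity of quadratic form and density
  have hqcont : Continuous fun y : Fin d → ℝ => (y - s) ⬝ᵥ (A⁻¹ *ᵥ (y - s)) := by
    simp only [dotProduct, mulVec]
    fun_prop
  have hgcont : Continuous (gaussDensity 0 A) := by
    unfold gaussDensity
    have h0 : Continuous fun y : Fin d → ℝ => (y - 0) ⬝ᵥ (A⁻¹ *ᵥ (y - 0)) := by
      simp only [dotProduct, mulVec]
      fun_prop
    exact continuous_const.mul (Real.continuous_exp.comp (continuous_const.mul h0))
  have hgnn : ∀ y, 0 ≤ gaussDensity 0 A y := fun y =>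
    (mul_pos hKpos (Real.exp_pos _)).le
  -- Bx is inside the region
  have hnorm_sub : ∀ y ∈ Bx, ‖y - s‖ ≤ ε' := by
    intro y hy
    rw [pi_norm_le_iff_of_nonneg hε'0]
    intro i
    have h := Set.mem_univ_pi.mp hy i
    rw [Pi.sub_apply, Real.norm_eq_abs, abs_le]
    exact ⟨by linarith [h.1], by linarith [h.2]⟩
  have hsub : Bx ⊆ Rg := by
    intro y hy
    refine ⟨fun i => (Set.mem_univ_pi.mp hy i).1, ?_⟩
    exact key_small hBpd hε (y - s) (hnorm_sub y hy)
  -- compactness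
  have hBxcompact : IsCompact Bx := isCompact_univ_pi fun i => isCompact_Icc
  have hRgclosed : IsClosed Rg := by
    have h1 : IsClosed {y : Fin d → ℝ | s ≤ y} := by
      have : {y : Fin d → ℝ | s ≤ y} = ⋂ i, {y : Fin d → ℝ | s i ≤ y i} := by
        ext y
        simp [Pi.le_def]
      rw [this]
      exact isClosed_iInter fun i => isClosed_le continuous_const (continuous_apply i)
    have h2 : IsClosed {y : Fin d → ℝ | (y - s) ⬝ᵥ (A⁻¹ *ᵥ (y - s)) ≤ ε ^ 2} :=
      isClosed_le hqcont continuous_const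
    exact h1.inter h2
  have hRgcompact : IsCompact Rg := by
    obtain ⟨R, hR0, hR⟩ := ellipsoid_bounded hBpd ε
    have hbd : Bornology.IsBounded Rg := by
      refine (Metric.isBounded_closedBall (x := s) (r := R)).subset ?_
      intro y hy
      rw [Metric.mem_closedBall, dist_eq_norm]
      exact hR _ hy.2
    exact Metric.isCompact_of_isClosed_isBounded hRgclosed hbd
  -- pointwise bound on Bx
  have hpt : ∀ y ∈ Bx,
      (2 * Real.pi) ^ (-(d : ℝ) / 2) * A.det ^ (-(1 : ℝ) / 2) *
          Real.exp (-(ε ^ 2) / 2) * Real.exp (-(s ⬝ᵥ (A⁻¹ *ᵥ s)) / 2) *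
          ∏ i, Real.exp (-(s ⬝ᵥ (A⁻¹ *ᵥ (Pi.single i 1))) * (y i - s i)) ≤
        gaussDensity 0 A y := by
    intro y hy
    have hq : (y - s) ⬝ᵥ (A⁻¹ *ᵥ (y - s)) ≤ ε ^ 2 :=
      key_small hBpd hε (y - s) (hnorm_sub y hy)
    have hexp : ∏ i, Real.exp (-(s ⬝ᵥ (A⁻¹ *ᵥ (Pi.single i 1))) * (y i - s i)) =
        Real.exp (-((s ᵥ* A⁻¹) ⬝ᵥ (y - s))) := by
      rw [← Real.exp_sum]
      congr 1
      rw [lin_coords, ← Finset.sum_neg_distrib]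
      refine Finset.sum_congr rfl fun i _ => ?_
      simp [Pi.sub_apply, neg_mul]
    have hy_expand : y ⬝ᵥ (A⁻¹ *ᵥ y) =
        s ⬝ᵥ (A⁻¹ *ᵥ s) + 2 * ((s ᵥ* A⁻¹) ⬝ᵥ (y - s)) + (y - s) ⬝ᵥ (A⁻¹ *ᵥ (y - s)) := by
      conv_lhs => rw [show y = s + (y - s) by rw [add_sub_cancel]]
      exact quad_expand hBsym s (y - s)
    rw [hexp]
    unfold gaussDensity
    rw [sub_zero]
    rw [mul_assoc, mul_assoc, ← Real.exp_add, ← Real.exp_add]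
    refine mul_le_mul_of_nonneg_left (Real.exp_le_exp.mpr ?_) hKpos.le
    rw [hy_expand]
    nlinarith [hq]
  -- integrability
  have hprodcont : Continuous fun y : Fin d → ℝ =>
      ∏ i, Real.exp (-(s ⬝ᵥ (A⁻¹ *ᵥ (Pi.single i 1))) * (y i - s i)) := by
    refine continuous_finset_prod _ fun i _ => ?_
    exact Real.continuous_exp.comp
      (continuous_const.mul ((continuous_apply i).sub continuous_const))
  have hint1 : IntegrableOn (fun y : Fin d → ℝ =>
      (2 * Real.pi) ^ (-(d : ℝ) / 2) * A.det ^ (-(1 : ℝ) / 2) *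
        Real.exp (-(ε ^ 2) / 2) * Real.exp (-(s ⬝ᵥ (A⁻¹ *ᵥ s)) / 2) *
        ∏ i, Real.exp (-(s ⬝ᵥ (A⁻¹ *ᵥ (Pi.single i 1))) * (y i - s i))) Bx :=
    (continuous_const.mul hprodcont).continuousOn.integrableOn_compact hBxcompact
  have hint2 : IntegrableOn (gaussDensity 0 A) Bx :=
    hgcont.continuousOn.integrableOn_compact hBxcompact
  have hint3 : IntegrableOn (gaussDensity 0 A) Rg :=
    hgcont.continuousOn.integrableOn_compact hRgcompact
  -- main computation
  have hboxval : ∫ y in Bx,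
      (2 * Real.pi) ^ (-(d : ℝ) / 2) * A.det ^ (-(1 : ℝ) / 2) *
        Real.exp (-(ε ^ 2) / 2) * Real.exp (-(s ⬝ᵥ (A⁻¹ *ᵥ s)) / 2) *
        ∏ i, Real.exp (-(s ⬝ᵥ (A⁻¹ *ᵥ (Pi.single i 1))) * (y i - s i)) =
      (2 * Real.pi) ^ (-(d : ℝ) / 2) * A.det ^ (-(1 : ℝ) / 2) *
        Real.exp (-(ε ^ 2) / 2) * Real.exp (-(s ⬝ᵥ (A⁻¹ *ᵥ s)) / 2) *
        ∏ i, (1 - Real.exp (-(s ⬝ᵥ (A⁻¹ *ᵥ (Pi.single i 1))) * ε')) /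
          (s ⬝ᵥ (A⁻¹ *ᵥ (Pi.single i 1))) := by
    rw [MeasureTheory.integral_const_mul]
    rw [box_integral s ε' hε'0 (fun i => s ⬝ᵥ (A⁻¹ *ᵥ (Pi.single i 1)))
      (fun i => (hpos i).ne')]
  calc (2 * Real.pi) ^ (-(d : ℝ) / 2) * A.det ^ (-(1 : ℝ) / 2) *
        Real.exp (-(ε ^ 2) / 2) * Real.exp (-(s ⬝ᵥ (A⁻¹ *ᵥ s)) / 2) *
        ∏ i : Fin d,
          (1 - Real.exp (-(s ⬝ᵥ (A⁻¹ *ᵥ (Pi.single i 1))) * ε')) /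
            (s ⬝ᵥ (A⁻¹ *ᵥ (Pi.single i 1)))
      = ∫ y in Bx,
          (2 * Real.pi) ^ (-(d : ℝ) / 2) * A.det ^ (-(1 : ℝ) / 2) *
            Real.exp (-(ε ^ 2) / 2) * Real.exp (-(s ⬝ᵥ (A⁻¹ *ᵥ s)) / 2) *
            ∏ i, Real.exp (-(s ⬝ᵥ (A⁻¹ *ᵥ (Pi.single i 1))) * (y i - s i)) := hboxval.symm
    _ ≤ ∫ y in Bx, gaussDensity 0 A y :=
        setIntegral_mono_on hint1 hint2 hBxcompact.measurableSet hpt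
    _ ≤ ∫ y in Rg, gaussDensity 0 A y := by
        apply setIntegral_mono_set hint3
        · exact Filter.Eventually.of_forall fun y => hgnn y
        · exact HasSubset.Subset.eventuallyLE hsub
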